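/- Let E: y² = x(x² + ax + b) and E′: y² = x(x² + a′x + b′) with a′ = −2a and b′ = a² − 4b, and let φ : E → E′ be the 2-isogeny with kernel {O, (0,0)}. Define φ̄ : E′(ℚ) → ℚ^×/(ℚ^×)² by φ̄((x,y)) = x̄ for x ≠ 0, φ̄((0,0)) = the class of a² − 4b, and φ̄(O) = 1. Then φ̄ is a group homomorphism whose kernel is exactly φ(E(ℚ)); in particular E′(ℚ)/φ(E(ℚ)) ≅ φ̄(E′(ℚ)). -/

import Mathlib

/-- The subgroup of squares in `ℚˣ`. -/
def QSq : Subgroup ℚˣ := (powMonoidHom 2 : ℚˣ →* ℚˣ).range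

/-- The class of a nonzero rational number in `ℚˣ/(ℚˣ)²` (junk value `1` at `0`). -/
noncomputable def sqClass (x : ℚ) : ℚˣ ⧸ QSq :=
  if h : x = 0 then 1 else QuotientGroup.mk (Units.mk0 x h)

lemma sqClass_mul {x y : ℚ} (hx : x ≠ 0) (hy : y ≠ 0) :
    sqClass (x * y) = sqClass x * sqClass y := by
  rw [sqClass, sqClass, sqClass, dif_neg hx, dif_neg hy, dif_neg (mul_ne_zero hx hy)]
  rw [← QuotientGroup.mk_mul]
  congr 1
  ext
  simp

lemma sqClass_mul_self (x : ℚ) : sqClass x * sqClass x = 1 := by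
  by_cases hx : x = 0
  · simp [sqClass, hx]
  · rw [sqClass, dif_neg hx, ← QuotientGroup.mk_mul, QuotientGroup.eq_one_iff]
    exact ⟨Units.mk0 x hx, by ext; simp [pow_two]⟩

lemma sqClass_sq_mul {t x : ℚ} (ht : t ≠ 0) (hx : x ≠ 0) :
    sqClass (t ^ 2 * x) = sqClass x := by
  rw [pow_two, mul_assoc, sqClass_mul ht (mul_ne_zero ht hx), sqClass_mul ht hx,
    ← mul_assoc, sqClass_mul_self, one_mul]

lemma sqClass_div {x y : ℚ} (hy : y ≠ 0) : sqClass (x / y) = sqClass (x * y) := by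
  by_cases hx : x = 0
  · simp [hx]
  · have : x / y = (1 / y) ^ 2 * (x * y) := by field_simp
    rw [this, sqClass_sq_mul (by simp [hy]) (mul_ne_zero hx hy)]

lemma sqClass_eq_one_iff {x : ℚ} (hx : x ≠ 0) :
    sqClass x = 1 ↔ ∃ t : ℚ, x = t ^ 2 := by
  rw [sqClass, dif_neg hx, QuotientGroup.eq_one_iff]
  constructor
  · rintro ⟨v, hv⟩
    refine ⟨(v : ℚ), ?_⟩
    have : ((powMonoidHom 2 v : ℚˣ) : ℚ) = x := by rw [hv]; simp
    simpa [powMonoidHom] using this.symm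
  · rintro ⟨t, ht⟩
    have ht0 : t ≠ 0 := by rintro rfl; simp at ht; exact hx ht
    exact ⟨Units.mk0 t ht0, by ext; simp [powMonoidHom, ht]⟩

lemma sqClass_sq_eq_one {t : ℚ} (ht : t ≠ 0) : sqClass (t ^ 2) = 1 := by
  rw [sqClass_eq_one_iff (pow_ne_zero 2 ht)]; exact ⟨t, rfl⟩

lemma vieta_chord (a' b' L ν x₁ x₂ : ℚ) (hx : x₁ ≠ x₂)
    (g₁ : (L * x₁ + ν) ^ 2 = x₁ ^ 3 + a' * x₁ ^ 2 + b' * x₁)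
    (g₂ : (L * x₂ + ν) ^ 2 = x₂ ^ 3 + a' * x₂ ^ 2 + b' * x₂) :
    x₁ * x₂ * (L ^ 2 - a' - x₁ - x₂) = ν ^ 2 ∧
    x₁ * x₂ + (L ^ 2 - a' - x₁ - x₂) * (x₁ + x₂) = b' - 2 * L * ν := by
  have hd : x₁ - x₂ ≠ 0 := sub_ne_zero.mpr hx
  constructor
  · have h : (x₁ - x₂) * (x₁ * x₂ * (L ^ 2 - a' - x₁ - x₂) - ν ^ 2) = 0 := by
      linear_combination x₂ * g₁ - x₁ * g₂
    rcases mul_eq_zero.mp h with h | h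
    · exact absurd h hd
    · linarith [h]
  · have h : (x₁ - x₂) * (x₁ * x₂ + (L ^ 2 - a' - x₁ - x₂) * (x₁ + x₂) - (b' - 2 * L * ν)) = 0 := by
      linear_combination g₁ - g₂
    rcases mul_eq_zero.mp h with h | h
    · exact absurd h hd
    · linarith [h]

lemma vieta_tang (a' b' L ν x₁ : ℚ)
    (g₁ : (L * x₁ + ν) ^ 2 = x₁ ^ 3 + a' * x₁ ^ 2 + b' * x₁)
    (t₁ : 2 * (L * x₁ + ν) * L = 3 * x₁ ^ 2 + 2 * a' * x₁ + b') :
    x₁ * x₁ * (L ^ 2 - a' - x₁ - x₁) = ν ^ 2 ∧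
    x₁ * x₁ + (L ^ 2 - a' - x₁ - x₁) * (x₁ + x₁) = b' - 2 * L * ν := by
  constructor
  · linear_combination -g₁ + x₁ * t₁
  · linear_combination t₁


open WeierstrassCurve.Affine in
noncomputable def phib (a b : ℚ) {W' : WeierstrassCurve.Affine ℚ} : W'.Point → ℚˣ ⧸ QSq
  | .zero => 1
  | @Point.some _ _ _ x _ _ => if x = 0 then sqClass (a ^ 2 - 4 * b) else sqClass x

open WeierstrassCurve.Affine in
lemma phib_zero (a b : ℚ) (W' : WeierstrassCurve.Affine ℚ) : phib a b (0 : W'.Point) = 1 := rfl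

open WeierstrassCurve.Affine in
lemma phib_some (a b : ℚ) (W' : WeierstrassCurve.Affine ℚ) {x y : ℚ} (h : W'.Nonsingular x y) :
    phib a b (Point.some _ _ h) = if x = 0 then sqClass (a ^ 2 - 4 * b) else sqClass x := rfl

section curve
variable (W : WeierstrassCurve.Affine ℚ) (h1 : W.a₁ = 0) (h3 : W.a₃ = 0) (h6 : W.a₆ = 0)
include h1 h3 h6

lemma eqW (x y : ℚ) : W.Equation x y ↔ y ^ 2 = x ^ 3 + W.a₂ * x ^ 2 + W.a₄ * x := by
  rw [WeierstrassCurve.Affine.equation_iff, h1, h3, h6]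
  constructor <;> intro h <;> linear_combination h

omit h6 in
lemma negYW (x y : ℚ) : W.negY x y = -y := by
  rw [WeierstrassCurve.Affine.negY, h1, h3]; ring

lemma deltaW (hb : W.a₄ * (W.a₂ ^ 2 - 4 * W.a₄) ≠ 0) : W.Δ ≠ 0 := by
  have : W.Δ = 16 * W.a₄ ^ 2 * (W.a₂ ^ 2 - 4 * W.a₄) := by
    simp only [WeierstrassCurve.Δ, WeierstrassCurve.b₂, WeierstrassCurve.b₄, WeierstrassCurve.b₆,
      WeierstrassCurve.b₈, h1, h3, h6]
    ring
  rw [this]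
  have hb1 : W.a₄ ≠ 0 := fun h => hb (by simp [h])
  have hb2 : W.a₂ ^ 2 - 4 * W.a₄ ≠ 0 := fun h => hb (by simp [h])
  positivity

lemma nsW (hb : W.a₄ * (W.a₂ ^ 2 - 4 * W.a₄) ≠ 0) {x y : ℚ}
    (h : y ^ 2 = x ^ 3 + W.a₂ * x ^ 2 + W.a₄ * x) : W.Nonsingular x y :=
  (W.equation_iff_nonsingular_of_Δ_ne_zero (deltaW W h1 h3 h6 hb)).mp ((eqW W h1 h3 h6 x y).mpr h)

end curve

lemma point_ext (W' : WeierstrassCurve.Affine ℚ) {x y x0 y0 : ℚ} (hh : W'.Nonsingular x y)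
    (hh0 : W'.Nonsingular x0 y0) (hx : x = x0) (hy : y = y0) :
    WeierstrassCurve.Affine.Point.some _ _ hh = .some _ _ hh0 := by subst hx hy; rfl

/-- The descent map `φ̄ : E′(ℚ) → ℚˣ/(ℚˣ)²` associated with the 2-isogeny
`φ : E → E′` (where `E : y² = x(x² + ax + b)` and
`E′ : y² = x(x² - 2ax + (a² - 4b))`), sending `(x,y) ↦ x̄` for `x ≠ 0`,
`(0,0) ↦ a² - 4b`, `O ↦ 1`, is a group homomorphism with kernel `φ(E(ℚ))`. -/
theorem stmt_14 (a b : ℚ) (hb : b * (a ^ 2 - 4 * b) ≠ 0)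
    (W W' : WeierstrassCurve.Affine ℚ)
    (hW : W = { a₁ := 0, a₂ := a, a₃ := 0, a₄ := b, a₆ := 0 })
    (hW' : W' = { a₁ := 0, a₂ := -2 * a, a₃ := 0, a₄ := a ^ 2 - 4 * b, a₆ := 0 })
    (h₀ : W.Nonsingular 0 0) (h₀' : W'.Nonsingular 0 0)
    (φ : W.Point →+ W'.Point)
    (hφ : ∀ x y (h : W.Nonsingular x y), x ≠ 0 →
      ∃ h' : W'.Nonsingular (x + a + b / x) (y - b * y / x ^ 2),
        φ (.some _ _ h) = .some _ _ h')
    (hker : ∀ P : W.Point, φ P = 0 ↔ (P = 0 ∨ P = .some _ _ h₀)) :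
    ∃ φb : W'.Point → ℚˣ ⧸ QSq,
      φb 0 = 1 ∧
      φb (.some _ _ h₀') = sqClass (a ^ 2 - 4 * b) ∧
      (∀ x y (h : W'.Nonsingular x y), x ≠ 0 → φb (.some _ _ h) = sqClass x) ∧
      (∀ P Q : W'.Point, φb (P + Q) = φb P * φb Q) ∧
      (∀ P : W'.Point, φb P = 1 ↔ P ∈ Set.range φ) := by
  classical
  have hbne : b ≠ 0 := fun h => hb (by simp [h])
  have hb' : a ^ 2 - 4 * b ≠ 0 := fun h => hb (by simp [h])
  -- projections
  have w1 : W.a₁ = 0 := by rw [hW]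
  have w2 : W.a₂ = a := by rw [hW]
  have w3 : W.a₃ = 0 := by rw [hW]
  have w4 : W.a₄ = b := by rw [hW]
  have w6 : W.a₆ = 0 := by rw [hW]
  have v1 : W'.a₁ = 0 := by rw [hW']
  have v2 : W'.a₂ = -2 * a := by rw [hW']
  have v3 : W'.a₃ = 0 := by rw [hW']
  have v4 : W'.a₄ = a ^ 2 - 4 * b := by rw [hW']
  have v6 : W'.a₆ = 0 := by rw [hW']
  have eW : ∀ x y : ℚ, W.Equation x y ↔ y ^ 2 = x ^ 3 + a * x ^ 2 + b * x := by
    intro x y; rw [eqW W w1 w3 w6, w2, w4]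
  have eW' : ∀ x y : ℚ, W'.Equation x y ↔
      y ^ 2 = x ^ 3 + (-2 * a) * x ^ 2 + (a ^ 2 - 4 * b) * x := by
    intro x y; rw [eqW W' v1 v3 v6, v2, v4]
  have nW : ∀ x y : ℚ, y ^ 2 = x ^ 3 + a * x ^ 2 + b * x → W.Nonsingular x y := by
    intro x y h
    exact nsW W w1 w3 w6 (by rw [w2, w4]; exact hb) (by rw [w2, w4]; exact h)
  have negY' : ∀ x y : ℚ, W'.negY x y = -y := negYW W' v1 v3
  -- the descent map
  refine ⟨phib a b, phib_zero a b W', ?_, ?_, ?_, ?_⟩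
  · rw [phib_some, if_pos rfl]
  · intro x y h hx
    rw [phib_some, if_neg hx]
  · intro P Q
    cases P with
    | zero => rw [← WeierstrassCurve.Affine.Point.zero_def, _root_.zero_add, phib_zero, _root_.one_mul]
    | @some x₁ y₁ h₁ =>
      cases Q with
      | zero => rw [← WeierstrassCurve.Affine.Point.zero_def, _root_.add_zero, phib_zero, _root_.mul_one]
      | @some x₂ y₂ h₂ =>
        by_cases hxy : x₁ = x₂ ∧ y₁ = W'.negY x₂ y₂
        · rw [WeierstrassCurve.Affine.Point.add_of_Y_eq hxy.1 hxy.2, phib_zero,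
            phib_some, phib_some, hxy.1]
          split_ifs <;> exact (sqClass_mul_self _).symm
        · have hxy' : x₁ = x₂ → y₁ ≠ W'.negY x₂ y₂ := fun hx hy => hxy ⟨hx, hy⟩
          rw [WeierstrassCurve.Affine.Point.add_some hxy, phib_some, phib_some, phib_some]
          set L := W'.slope x₁ x₂ y₁ y₂ with hLdef
          have e₁ : y₁ ^ 2 = x₁ ^ 3 + (-2 * a) * x₁ ^ 2 + (a ^ 2 - 4 * b) * x₁ := (eW' _ _).mp h₁.1
          have e₂ : y₂ ^ 2 = x₂ ^ 3 + (-2 * a) * x₂ ^ 2 + (a ^ 2 - 4 * b) * x₂ := (eW' _ _).mp h₂.1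
          obtain ⟨ν, hv1, hv2⟩ :
              ∃ ν : ℚ, x₁ * x₂ * (L ^ 2 - (-2 * a) - x₁ - x₂) = ν ^ 2 ∧
                x₁ * x₂ + (L ^ 2 - (-2 * a) - x₁ - x₂) * (x₁ + x₂)
                  = (a ^ 2 - 4 * b) - 2 * L * ν := by
            by_cases hx : x₁ = x₂
            · have hy2 : y₁ = y₂ := WeierstrassCurve.Affine.Y_eq_of_Y_ne h₁.1 h₂.1 hx (hxy' hx)
              have hyne : y₁ ≠ -y₁ := by
                have := hxy' hx
                rw [negY', ← hy2] at this
                exact this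
              have hy0 : y₁ ≠ 0 := fun h => hyne (by rw [h]; ring)
              have hL2 : 2 * y₁ * L = 3 * x₁ ^ 2 + 2 * (-2 * a) * x₁ + (a ^ 2 - 4 * b) := by
                rw [hLdef, WeierstrassCurve.Affine.slope_of_Y_ne hx (hxy' hx), v1, v2, v4,
                  negY']
                have h2y : y₁ - -y₁ = 2 * y₁ := by ring
                rw [h2y]
                field_simp
                ring
              rw [← hx]
              refine ⟨y₁ - L * x₁, ?_, ?_⟩
              · exact (vieta_tang (-2 * a) (a ^ 2 - 4 * b) L (y₁ - L * x₁) x₁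
                  (by linear_combination e₁) (by linear_combination hL2)).1
              · exact (vieta_tang (-2 * a) (a ^ 2 - 4 * b) L (y₁ - L * x₁) x₁
                  (by linear_combination e₁) (by linear_combination hL2)).2
            · have hL : L = (y₁ - y₂) / (x₁ - x₂) := by
                rw [hLdef, WeierstrassCurve.Affine.slope_of_X_ne hx]
              have hd : x₁ - x₂ ≠ 0 := sub_ne_zero.mpr hx
              have hy2 : L * x₂ + (y₁ - L * x₁) = y₂ := by
                rw [hL]; field_simp; ring
              refine ⟨y₁ - L * x₁, ?_, ?_⟩
              · exact (vieta_chord (-2 * a) (a ^ 2 - 4 * b) L (y₁ - L * x₁) x₁ x₂ hx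
                  (by linear_combination e₁) (by rw [hy2]; exact e₂)).1
              · exact (vieta_chord (-2 * a) (a ^ 2 - 4 * b) L (y₁ - L * x₁) x₁ x₂ hx
                  (by linear_combination e₁) (by rw [hy2]; exact e₂)).2
          have haddX : W'.addX x₁ x₂ L = L ^ 2 - (-2 * a) - x₁ - x₂ := by
            simp only [WeierstrassCurve.Affine.addX, v1, v2]
            ring
          rw [haddX]
          set x₃ := L ^ 2 - (-2 * a) - x₁ - x₂ with hx₃
          by_cases hx₁0 : x₁ = 0
          · have hy₁0 : y₁ = 0 := by
              have h := e₁
              rw [hx₁0] at h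
              simpa using pow_eq_zero_iff (n := 2) two_ne_zero |>.mp (by simpa using h)
            have hx₂0 : x₂ ≠ 0 := by
              intro h0
              have hy₂0 : y₂ = 0 := by
                have h := e₂
                rw [h0] at h
                simpa using pow_eq_zero_iff (n := 2) two_ne_zero |>.mp (by simpa using h)
              exact hxy ⟨hx₁0.trans h0.symm, by rw [negY', hy₁0, hy₂0]; ring⟩
            have hν : ν = 0 := by
              have h := hv1
              rw [hx₁0] at h
              simpa using (pow_eq_zero_iff (n := 2) two_ne_zero |>.mp (by simpa using h.symm))
            have hkey : x₃ * x₂ = a ^ 2 - 4 * b := by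
              linear_combination hv2 + (-x₂ - x₃) * hx₁0 + (-2 * L) * hν
            have hx₃0 : x₃ ≠ 0 := fun h => hb' (by rw [← hkey, h, zero_mul])
            rw [if_neg hx₃0, if_pos hx₁0, if_neg hx₂0]
            have hx3 : x₃ = (a ^ 2 - 4 * b) / x₂ := by
              field_simp
              linear_combination hkey
            rw [hx3, sqClass_div hx₂0, sqClass_mul hb' hx₂0]
          · by_cases hx₂0 : x₂ = 0
            · have hy₂0 : y₂ = 0 := by
                have h := e₂
                rw [hx₂0] at h
                simpa using pow_eq_zero_iff (n := 2) two_ne_zero |>.mp (by simpa using h)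
              have hν : ν = 0 := by
                have h := hv1
                rw [hx₂0] at h
                simpa using (pow_eq_zero_iff (n := 2) two_ne_zero |>.mp (by simpa using h.symm))
              have hkey : x₃ * x₁ = a ^ 2 - 4 * b := by
                linear_combination hv2 + (-x₁ - x₃) * hx₂0 + (-2 * L) * hν
              have hx₃0 : x₃ ≠ 0 := fun h => hb' (by rw [← hkey, h, zero_mul])
              rw [if_neg hx₃0, if_neg hx₁0, if_pos hx₂0]
              have hx3 : x₃ = (a ^ 2 - 4 * b) / x₁ := by
                field_simp
                linear_combination hkey
              rw [hx3, sqClass_div hx₁0, sqClass_mul hb' hx₁0, mul_comm]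
            · by_cases hx₃0 : x₃ = 0
              · have hν : ν = 0 := by
                  have h := hv1
                  rw [hx₃0] at h
                  simpa using (pow_eq_zero_iff (n := 2) two_ne_zero |>.mp (by simpa using h.symm))
                have hkey : x₁ * x₂ = a ^ 2 - 4 * b := by
                  linear_combination hv2 + (-(x₁ + x₂)) * hx₃0 + (-2 * L) * hν
                rw [if_pos hx₃0, if_neg hx₁0, if_neg hx₂0, ← sqClass_mul hx₁0 hx₂0, hkey]
              · have hν : ν ≠ 0 := by
                  intro h
                  rw [h] at hv1
                  exact mul_ne_zero (mul_ne_zero hx₁0 hx₂0) hx₃0 (by simpa using hv1)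
                rw [if_neg hx₃0, if_neg hx₁0, if_neg hx₂0]
                have hx3 : x₃ = ν ^ 2 / (x₁ * x₂) := by
                  field_simp
                  linear_combination hv1
                rw [hx3, sqClass_div (mul_ne_zero hx₁0 hx₂0),
                  sqClass_sq_mul hν (mul_ne_zero hx₁0 hx₂0), sqClass_mul hx₁0 hx₂0]
  · intro P
    constructor
    · cases P with
      | zero => exact fun _ => ⟨0, map_zero φ⟩
      | @some x' y' h' =>
        intro h1
        rw [phib_some] at h1
        by_cases hx0 : x' = 0
        · rw [if_pos hx0] at h1
          obtain ⟨t, ht⟩ := (sqClass_eq_one_iff hb').mp h1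
          have ht0 : t ≠ 0 := by rintro rfl; exact hb' (by simpa using ht)
          subst hx0
          have hy0 : y' = 0 := by
            have h := (eW' _ _).mp h'.1
            exact pow_eq_zero_iff (n := 2) two_ne_zero |>.mp (by simpa using h)
          subst hy0
          set ξ := (-a + t) / 2 with hξdef
          have hξeq : ξ ^ 2 + a * ξ + b = 0 := by
            rw [hξdef]; linear_combination (-1/4 : ℚ) * ht
          have hξ0 : ξ ≠ 0 := by
            intro h; rw [h] at hξeq; exact hbne (by simpa using hξeq)
          have heq : (0 : ℚ) ^ 2 = ξ ^ 3 + a * ξ ^ 2 + b * ξ := by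
            linear_combination (-ξ) * hξeq
          obtain ⟨h'', himg⟩ := hφ ξ 0 (nW _ _ heq) hξ0
          refine ⟨.some _ _ (nW _ _ heq), ?_⟩
          rw [himg]
          apply point_ext
          · field_simp
            linear_combination hξeq
          · ring
        · rw [if_neg hx0] at h1
          obtain ⟨t, ht⟩ := (sqClass_eq_one_iff hx0).mp h1
          have ht0 : t ≠ 0 := fun h => hx0 (by rw [ht, h]; ring)
          have e' : y' ^ 2 = x' ^ 3 + (-2 * a) * x' ^ 2 + (a ^ 2 - 4 * b) * x' := (eW' _ _).mp h'.1
          by_cases hsp : y' = 0 ∧ (x' - a) ^ 2 = 4 * b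
          · obtain ⟨hy'0, hdisc⟩ := hsp
            obtain ⟨ξ, hξb, hx'ξ⟩ : ∃ ξ : ℚ, ξ ^ 2 = b ∧ x' = 2 * ξ + a :=
              ⟨(x' - a) / 2, by linear_combination (1/4 : ℚ) * hdisc, by ring⟩
            have hξ0 : ξ ≠ 0 := fun h => hbne (by rw [← hξb, h]; ring)
            have heq : (t * ξ) ^ 2 = ξ ^ 3 + a * ξ ^ 2 + b * ξ := by
              linear_combination (-ξ ^ 2) * ht + ξ ^ 2 * hx'ξ + ξ * hξb
            obtain ⟨h'', himg⟩ := hφ ξ (t * ξ) (nW _ _ heq) hξ0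
            refine ⟨.some _ _ (nW _ _ heq), ?_⟩
            rw [himg]
            have hbdiv : b / ξ = ξ := by
              rw [← hξb, sq, mul_div_assoc, div_self hξ0, mul_one]
            apply point_ext
            · rw [hbdiv, hx'ξ]; ring
            · rw [hy'0, ← hξb]
              field_simp
              ring
          · obtain ⟨s, hy's, hs2⟩ : ∃ s : ℚ, y' = s * t ∧ s ^ 2 = (x' - a) ^ 2 - 4 * b := by
              refine ⟨y' / t, by field_simp, ?_⟩
              rw [div_pow, ← ht, div_eq_iff hx0]
              linear_combination e'
            obtain ⟨x, hrel, hxb⟩ : ∃ x : ℚ, x ^ 2 = (x' - a) * x - b ∧ x ^ 2 ≠ b := by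
              by_cases hs0 : s = 0
              · refine ⟨(x' - a) / 2, by linear_combination (1/4 : ℚ) * hs2 - (s/4) * hs0, ?_⟩
                intro h
                exact hsp ⟨by rw [hy's, hs0, zero_mul], by linear_combination 4 * h⟩
              · have hrp : (((x' - a) + s) / 2) ^ 2 = (x' - a) * (((x' - a) + s) / 2) - b := by
                  linear_combination (1/4 : ℚ) * hs2
                have hrm : (((x' - a) - s) / 2) ^ 2 = (x' - a) * (((x' - a) - s) / 2) - b := by
                  linear_combination (1/4 : ℚ) * hs2
                have hprod : (((x' - a) + s) / 2) * (((x' - a) - s) / 2) = b := by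
                  linear_combination (-1/4 : ℚ) * hs2
                by_cases hbp : (((x' - a) + s) / 2) ^ 2 = b
                · refine ⟨((x' - a) - s) / 2, hrm, ?_⟩
                  intro hbm
                  have hxp0 : ((x' - a) + s) / 2 ≠ 0 := fun h =>
                    hbne (by rw [← hprod, h, zero_mul])
                  have hEq : ((x' - a) + s) / 2 = ((x' - a) - s) / 2 := by
                    have h2 : (((x' - a) + s) / 2) * (((x' - a) + s) / 2)
                        = (((x' - a) + s) / 2) * (((x' - a) - s) / 2) := by
                      rw [← pow_two, hbp, hprod]
                    exact mul_left_cancel₀ hxp0 h2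
                  exact hs0 (by linarith [hEq])
                · exact ⟨((x' - a) + s) / 2, hrp, hbp⟩
            have hx0' : x ≠ 0 := by
              intro h
              rw [h] at hrel
              exact hbne (by linarith [hrel])
            have hxb' : x ^ 2 - b ≠ 0 := sub_ne_zero.mpr hxb
            have h1' : x ^ 2 + a * x + b = x' * x := by linear_combination hrel
            have h3 : y' ^ 2 = x' * ((x' - a) ^ 2 - 4 * b) := by linear_combination e'
            have h4 : y' ^ 2 * x ^ 2 = x' * (x ^ 2 - b) ^ 2 := by
              linear_combination x ^ 2 * h3 +
                (-(x') * (4 * b + 2 * ((x' - a) * x - 2 * b) + (x ^ 2 - (x' - a) * x + b))) * hrel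
            have heq : (y' * x ^ 2 / (x ^ 2 - b)) ^ 2 = x ^ 3 + a * x ^ 2 + b * x := by
              rw [div_pow, div_eq_iff (pow_ne_zero 2 hxb')]
              linear_combination x ^ 2 * h4 + (-(x) * (x ^ 2 - b) ^ 2) * h1'
            obtain ⟨h'', himg⟩ := hφ x (y' * x ^ 2 / (x ^ 2 - b)) (nW _ _ heq) hx0'
            refine ⟨.some _ _ (nW _ _ heq), ?_⟩
            rw [himg]
            apply point_ext
            · field_simp
              linear_combination h1'
            · field_simp
    · rintro ⟨Q, rfl⟩
      cases Q with
      | zero =>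
        rw [← WeierstrassCurve.Affine.Point.zero_def, map_zero]
        exact phib_zero a b W'
      | @some ξ η hQ =>
        by_cases hξ : ξ = 0
        · subst hξ
          have hη : η = 0 := by
            have h := (eW _ _).mp hQ.1
            exact pow_eq_zero_iff (n := 2) two_ne_zero |>.mp (by simpa using h)
          subst hη
          have hz : φ (.some _ _ hQ) = 0 := (hker _).mpr (Or.inr rfl)
          rw [hz]
          exact phib_zero a b W'
        · obtain ⟨h'', himg⟩ := hφ ξ η hQ hξ
          rw [himg, phib_some]
          have e : η ^ 2 = ξ ^ 3 + a * ξ ^ 2 + b * ξ := (eW _ _).mp hQ.1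
          have hval : ξ + a + b / ξ = (ξ ^ 2 + a * ξ + b) / ξ := by field_simp
          by_cases hnum : ξ ^ 2 + a * ξ + b = 0
          · have hxc : ξ + a + b / ξ = 0 := by rw [hval, hnum, zero_div]
            rw [if_pos hxc]
            have hsq : a ^ 2 - 4 * b = (2 * ξ + a) ^ 2 := by linear_combination (-4 : ℚ) * hnum
            have h2ξ : 2 * ξ + a ≠ 0 := fun h => hb' (by rw [hsq, h]; ring)
            rw [hsq]
            exact sqClass_sq_eq_one h2ξ
          · have hxc : ξ + a + b / ξ ≠ 0 := by
              rw [hval]; exact div_ne_zero hnum hξ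
            rw [if_neg hxc]
            have hη0 : η ≠ 0 := by
              intro h
              have hz : ξ * (ξ ^ 2 + a * ξ + b) = 0 := by
                rw [h] at e; linear_combination -e
              rcases mul_eq_zero.mp hz with h' | h'
              · exact hξ h'
              · exact hnum h'
            have hval2 : ξ + a + b / ξ = (η / ξ) ^ 2 := by
              rw [hval, div_pow, div_eq_div_iff hξ (pow_ne_zero 2 hξ)]
              linear_combination -ξ * e
            rw [hval2]
            exact sqClass_sq_eq_one (div_ne_zero hη0 hξ)
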